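/- The symmetric 5×5 integer matrix C = [[3,0,−1,0,0],[0,2,0,−1,−1],[−1,0,2,−1,0],[0,−1,−1,2,−1],[0,−1,0,−1,3]] (the extended generalized Cartan matrix attached to the group G_8 ≅ A_5 ⊂ SL(3,ℂ)) is positive semidefinite, and the vector d = (1,4,3,5,3)ᵀ of dimensions of the irreducible representations of A_5 satisfies C·d = 0. -/

import Mathlib

noncomputable section

/-- The extended generalized Cartan matrix attached to `G₈ ≅ A₅ ⊂ SL(3,ℂ)`. -/
def CG8 : Matrix (Fin 5) (Fin 5) ℝ :=
  !![3, 0, -1, 0, 0;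
     0, 2, 0, -1, -1;
     -1, 0, 2, -1, 0;
     0, -1, -1, 2, -1;
     0, -1, 0, -1, 3]

/-- The vector of dimensions of the irreducible representations of `A₅`. -/
def dA5 : Fin 5 → ℝ := ![1, 4, 3, 5, 3]

/-- The extended generalized Cartan matrix of `G₈ ≅ A₅` is symmetric positive semidefinite,
and the dimension vector `(1,4,3,5,3)ᵀ` lies in its kernel. -/
theorem CG8_posSemidef_and_kernel :
    CG8.PosSemidef ∧ CG8.mulVec dA5 = 0 := by
  constructor
  · rw [Matrix.posSemidef_iff_dotProduct_mulVec]
    constructor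
    · ext i j
      fin_cases i <;> fin_cases j <;>
        simp [CG8, Matrix.conjTranspose_apply, Matrix.vecHead, Matrix.vecTail]
    · intro x
      have h : dotProduct (star x) (CG8.mulVec x) =
          3*(x 0)^2 + 2*(x 1)^2 + 2*(x 2)^2 + 2*(x 3)^2 + 3*(x 4)^2
          - 2*(x 0)*(x 2) - 2*(x 1)*(x 3) - 2*(x 1)*(x 4)
          - 2*(x 2)*(x 3) - 2*(x 3)*(x 4) := by
        simp [CG8, dotProduct, Matrix.mulVec, Fin.sum_univ_five, Matrix.vecHead, Matrix.vecTail]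
        ring
      rw [h]
      nlinarith [sq_nonneg (3*x 0 - x 2), sq_nonneg (5*x 1 - 4*x 3),
        sq_nonneg (3*x 1 - 4*x 4), sq_nonneg (5*x 2 - 3*x 3),
        sq_nonneg (3*x 3 - 5*x 4), sq_nonneg (x 0), sq_nonneg (x 4)]
  · ext i
    fin_cases i <;>
      simp [CG8, dA5, Matrix.mulVec, dotProduct, Fin.sum_univ_five, Matrix.vecHead, Matrix.vecTail] <;> ring

end
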